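/- For any two universal partial recursive functions U and U', there exists a constant c such that for every finite string s, the Algorithmic Information Content of s relative to U is at most the Algorithmic Information Content of s relative to U' plus c. -/
import Mathlib


/-- Algorithmic Information Content of `s` relative to machine `U`:
the length of the shortest binary program `p` with `U p = s`. -/
noncomputable def AIC {A : Type} [Primcodable A] (U : List Bool →. List A) (s : List A) : ℕ :=
  sInf {n | ∃ p : List Bool, p.length = n ∧ s ∈ U p}

/-- `U` is a universal partial recursive function: it is partial recursive and can
simulate any partial recursive `C` with bounded program-length overhead. -/
def Universal {A : Type} [Primcodable A] (U : List Bool →. List A) : Prop :=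
  Partrec U ∧ ∀ C : List Bool →. List A, Partrec C →
    ∃ c : ℕ, ∀ (p : List Bool) (s : List A), s ∈ C p →
      ∃ q : List Bool, s ∈ U q ∧ q.length ≤ p.length + c

/-- for any two universal machines `U`, `U'` there is a constant `c`
with `I_AIC(s, U) ≤ I_AIC(s, U') + c` for all strings `s`. -/
theorem aic_universal_invariance {A : Type} [Primcodable A]
    (U U' : List Bool →. List A) (hU : Universal U) (hU' : Universal U') :
    ∃ c : ℕ, ∀ s : List A, AIC U s ≤ AIC U' s + c := by
  obtain ⟨c, hc⟩ := hU.2 U' hU'.1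
  obtain ⟨c₂, hc₂⟩ := hU'.2 U hU.1
  refine ⟨c, fun s => ?_⟩
  by_cases h : {n | ∃ p : List Bool, p.length = n ∧ s ∈ U' p}.Nonempty
  · have hmem := Nat.sInf_mem h
    obtain ⟨p, hp, hps⟩ := hmem
    obtain ⟨q, hq, hql⟩ := hc p s hps
    calc AIC U s ≤ q.length := Nat.sInf_le ⟨q, rfl, hq⟩
      _ ≤ p.length + c := hql
      _ = AIC U' s + c := by rw [hp]; rfl
  · have hempty : {n | ∃ p : List Bool, p.length = n ∧ s ∈ U p} = ∅ := by
      rw [Set.eq_empty_iff_forall_notMem]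
      rintro n ⟨p, hp, hps⟩
      obtain ⟨q, hq, _⟩ := hc₂ p s hps
      exact h ⟨q.length, q, rfl, hq⟩
    simp [AIC, hempty]
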